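/- Let H be a complex Hilbert space, A and F continuous linear operators on H with F self-adjoint, and for s ∈ ℝ set Δ(s) := exp(sF) ∘ A* ∘ exp(−2sF) ∘ A ∘ exp(sF). Fix s ∈ ℝ and suppose Φ ∈ H is a unit vector with Δ(s) Φ = λ • Φ for a real number λ > 0, and set Ψ := λ^{-1/2} • ((exp(−sF) ∘ A ∘ exp(sF)) Φ). Then ⟪Φ, (F ∘ Δ(s) + Δ(s) ∘ F − 2 • (exp(sF) ∘ A* ∘ F ∘ exp(−2sF) ∘ A ∘ exp(sF))) Φ⟫ = 2λ ⟪Φ, F Φ⟫ − 2λ ⟪Ψ, F Ψ⟫. -/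

import Mathlib

set_option maxHeartbeats 1000000

open ContinuousLinearMap
open scoped InnerProductSpace

/-- Per-eigenvector identity for the variation of the regularised determinant:
`⟪Φ, Δ'(s) Φ⟫ = 2λ ⟪Φ, F Φ⟫ − 2λ ⟪Ψ, F Ψ⟫` where `Φ` is a unit eigenvector of
`Δ(s) = e^{sF} A* e^{-2sF} A e^{sF}` for the eigenvalue `λ > 0` and
`Ψ = λ^{-1/2} (e^{-sF} A e^{sF}) Φ`. -/
theorem variation_per_eigenvector
    {H : Type*} [NormedAddCommGroup H] [InnerProductSpace ℂ H] [CompleteSpace H]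
    (A F : H →L[ℂ] H) (hF : IsSelfAdjoint F) (s : ℝ)
    (Φ : H) (lam : ℝ) (hlam : 0 < lam) (hΦ : ‖Φ‖ = 1)
    (heig : (NormedSpace.exp (s • F) ∘L ContinuousLinearMap.adjoint A ∘L
        NormedSpace.exp ((-2 * s) • F) ∘L A ∘L NormedSpace.exp (s • F)) Φ
      = (lam : ℂ) • Φ) :
    ⟪Φ, (F ∘L (NormedSpace.exp (s • F) ∘L ContinuousLinearMap.adjoint A ∘L
          NormedSpace.exp ((-2 * s) • F) ∘L A ∘L NormedSpace.exp (s • F))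
        + (NormedSpace.exp (s • F) ∘L ContinuousLinearMap.adjoint A ∘L
          NormedSpace.exp ((-2 * s) • F) ∘L A ∘L NormedSpace.exp (s • F)) ∘L F
        - (2 : ℝ) • (NormedSpace.exp (s • F) ∘L ContinuousLinearMap.adjoint A ∘L F ∘L
          NormedSpace.exp ((-2 * s) • F) ∘L A ∘L NormedSpace.exp (s • F))) Φ⟫_ℂ
      = 2 * (lam : ℂ) * ⟪Φ, F Φ⟫_ℂ
        - 2 * (lam : ℂ) *
          ⟪((lam ^ (-(1/2 : ℝ)) : ℝ) : ℂ) •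
              (NormedSpace.exp ((-s) • F) ∘L A ∘L NormedSpace.exp (s • F)) Φ,
            F (((lam ^ (-(1/2 : ℝ)) : ℝ) : ℂ) •
              (NormedSpace.exp ((-s) • F) ∘L A ∘L NormedSpace.exp (s • F)) Φ)⟫_ℂ := by
  have hmul : ∀ (t u : ℝ) (v : H),
      NormedSpace.exp (t • F) (NormedSpace.exp (u • F) v)
        = NormedSpace.exp ((t + u) • F) v := by
    intro t u v
    have : NormedSpace.exp (t • F) * NormedSpace.exp (u • F)
        = NormedSpace.exp ((t + u) • F) := by
      rw [← NormedSpace.exp_add_of_commute_of_mem_ball (𝕂 := ℂ) (((Commute.refl F).smul_left t).smul_right u)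
          ((NormedSpace.expSeries_radius_eq_top ℂ (H →L[ℂ] H)).symm ▸ edist_lt_top _ _)
          ((NormedSpace.expSeries_radius_eq_top ℂ (H →L[ℂ] H)).symm ▸ edist_lt_top _ _),
        ← add_smul]
    exact congrArg (fun T => T v) this
  have hFe : ∀ (t : ℝ) (v : H),
      F (NormedSpace.exp (t • F) v) = NormedSpace.exp (t • F) (F v) := by
    intro t v
    have : F * NormedSpace.exp (t • F) = NormedSpace.exp (t • F) * F :=
      ((Commute.refl F).smul_right t).exp_right
    exact congrArg (fun T => T v) this
  have hadj : ∀ t : ℝ,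
      ContinuousLinearMap.adjoint (NormedSpace.exp (t • F)) = NormedSpace.exp (t • F) := by
    intro t
    rw [← star_eq_adjoint, NormedSpace.star_exp, star_smul, star_trivial, hF.star_eq]
  have hinn : ∀ (t : ℝ) (v u : H),
      ⟪NormedSpace.exp (t • F) v, u⟫_ℂ = ⟪v, NormedSpace.exp (t • F) u⟫_ℂ := by
    intro t v u
    conv_lhs => rw [← hadj t]
    rw [adjoint_inner_left]
  simp only [ContinuousLinearMap.sub_apply, ContinuousLinearMap.add_apply,
    ContinuousLinearMap.smul_apply, ContinuousLinearMap.comp_apply] at heig ⊢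
  set w : H := A (NormedSpace.exp (s • F) Φ) with hw
  -- term 1
  have t1 : ⟪Φ, F (NormedSpace.exp (s • F)
        (ContinuousLinearMap.adjoint A (NormedSpace.exp ((-2 * s) • F) w)))⟫_ℂ
      = (lam : ℂ) * ⟪Φ, F Φ⟫_ℂ := by
    rw [heig, map_smul, inner_smul_right]
  -- term 2
  have t2 : ⟪Φ, NormedSpace.exp (s • F) (ContinuousLinearMap.adjoint A
        (NormedSpace.exp ((-2 * s) • F) (A (NormedSpace.exp (s • F) (F Φ)))))⟫_ℂ
      = (lam : ℂ) * ⟪Φ, F Φ⟫_ℂ := by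
    rw [← hinn s]
    rw [adjoint_inner_right]
    rw [← hinn (-2 * s)]
    rw [← adjoint_inner_left A]
    rw [← hinn s]
    rw [← hw]
    rw [heig, inner_smul_left]
    simp
  -- term 3
  have t3 : ⟪Φ, NormedSpace.exp (s • F) (ContinuousLinearMap.adjoint A
        (F (NormedSpace.exp ((-2 * s) • F) w)))⟫_ℂ
      = ⟪NormedSpace.exp ((-s) • F) w, F (NormedSpace.exp ((-s) • F) w)⟫_ℂ := by
    rw [← hinn s, adjoint_inner_right, ← hw]
    have hsplit : NormedSpace.exp ((-2 * s) • F) w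
        = NormedSpace.exp ((-s) • F) (NormedSpace.exp ((-s) • F) w) := by
      rw [hmul, show (-s + -s : ℝ) = -2 * s by ring]
    rw [hsplit, hFe, ← hinn (-s)]
  rw [inner_sub_right, inner_add_right, t1, t2,
    RCLike.real_smul_eq_coe_smul (K := ℂ), inner_smul_right, t3,
    inner_smul_left, map_smul, inner_smul_right, Complex.conj_ofReal]
  have hc2 : ((lam ^ (-(1/2 : ℝ)) : ℝ) : ℂ) * ((lam ^ (-(1/2 : ℝ)) : ℝ) : ℂ) = (lam : ℂ)⁻¹ := by
    rw [← Complex.ofReal_mul, ← Real.rpow_add hlam]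
    norm_num [Real.rpow_neg_one]
  have hlamne : (lam : ℂ) ≠ 0 := by exact_mod_cast hlam.ne'
  have hinv : (lam : ℂ) * (lam : ℂ)⁻¹ = 1 := mul_inv_cancel₀ hlamne
  generalize ⟪(NormedSpace.exp ((-s) • F)) w, F ((NormedSpace.exp ((-s) • F)) w)⟫_ℂ = J
  push_cast
  linear_combination (2 * (lam : ℂ) * J) * hc2 + (2 * J) * hinv
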